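/- arXiv:2203.10984 — 3 statements merged into one kernel-verified Lean document; each statement's English description precedes it below -/
import Mathlib

section
/- Let n, k ≥ 1 be integers and p ≥ n a prime. Let Φ be the (2k × n) Vandermonde matrix over 𝔽_p with entries Φ_{i,j} = j^{i-1} mod p. Then for any two k-sparse vectors x, y ∈ 𝔽_p^n (each with at most k nonzero coordinates), if Φ·x = Φ·y then x = y. -/
lemma vsr_inj_aux (n p : ℕ) (hpn : n ≤ p) :
    Function.Injective (fun j : Fin n => (((j : ℕ) + 1 : ℕ) : ZMod p)) := by
  intro i j hij
  have hmod : ((i : ℕ) + 1) ≡ ((j : ℕ) + 1) [MOD p] :=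
    (ZMod.natCast_eq_natCast_iff _ _ _).mp hij
  rcases le_total (i : ℕ) (j : ℕ) with hle | hle
  · have hd := (Nat.modEq_iff_dvd' (by omega)).mp hmod
    rcases Nat.eq_zero_or_pos ((j : ℕ) + 1 - ((i : ℕ) + 1)) with h0 | h0
    · exact Fin.ext (by omega)
    · have := Nat.le_of_dvd h0 hd
      have := j.isLt
      omega
  · have hd := (Nat.modEq_iff_dvd' (by omega)).mp hmod.symm
    rcases Nat.eq_zero_or_pos ((i : ℕ) + 1 - ((j : ℕ) + 1)) with h0 | h0
    · exact Fin.ext (by omega)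
    · have := Nat.le_of_dvd h0 hd
      have := i.isLt
      omega

/-- Sparse recovery via the Vandermonde matrix: if `p ≥ n` is prime and
`Φ : 𝔽_p^{2k × n}` has entries `Φ_{i,j} = j^{i-1}` (columns indexed by
`j ∈ {1,…,n}`), then any two `k`-sparse vectors with the same image under `Φ`
are equal. -/
theorem vandermonde_sparse_recovery (n k p : ℕ) (hn : 1 ≤ n) (hk : 1 ≤ k)
    (hp : p.Prime) (hpn : n ≤ p)
    (x y : Fin n → ZMod p)
    (hx : (Finset.univ.filter fun j : Fin n => x j ≠ 0).card ≤ k)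
    (hy : (Finset.univ.filter fun j : Fin n => y j ≠ 0).card ≤ k)
    (h : (Matrix.of fun (i : Fin (2 * k)) (j : Fin n) =>
            (((j : ℕ) + 1 : ZMod p)) ^ (i : ℕ)).mulVec x
       = (Matrix.of fun (i : Fin (2 * k)) (j : Fin n) =>
            (((j : ℕ) + 1 : ZMod p)) ^ (i : ℕ)).mulVec y) :
    x = y := by
  haveI : Fact p.Prime := ⟨hp⟩
  classical
  set z : Fin n → ZMod p := fun j => x j - y j with hzdef
  set a : Fin n → ZMod p := fun j => ((j : ℕ) + 1 : ZMod p) with hadef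
  have ha_inj : Function.Injective a := by
    have := vsr_inj_aux n p hpn
    intro i j hij
    exact this (by push_cast; simpa [hadef] using hij)
  -- the rows of Φ annihilate z
  have hz : ∀ i : Fin (2 * k), ∑ j : Fin n, z j * a j ^ (i : ℕ) = 0 := by
    intro i
    have hi := congrFun h i
    simp only [Matrix.mulVec, dotProduct, Matrix.of_apply] at hi
    have : ∑ j : Fin n, (a j ^ (i : ℕ) * x j - a j ^ (i : ℕ) * y j) = 0 := by
      rw [Finset.sum_sub_distrib]
      simpa [hadef] using sub_eq_zero_of_eq hi
    calc ∑ j : Fin n, z j * a j ^ (i : ℕ)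
        = ∑ j : Fin n, (a j ^ (i : ℕ) * x j - a j ^ (i : ℕ) * y j) := by
          apply Finset.sum_congr rfl; intro j _; rw [hzdef]; ring
      _ = 0 := this
  -- the support of z
  set S : Finset (Fin n) := Finset.univ.filter fun j => z j ≠ 0 with hSdef
  have hScard : S.card ≤ 2 * k := by
    have hsub : S ⊆ (Finset.univ.filter fun j : Fin n => x j ≠ 0) ∪
        (Finset.univ.filter fun j : Fin n => y j ≠ 0) := by
      intro j hj
      simp only [hSdef, Finset.mem_filter, Finset.mem_univ, true_and] at hj
      simp only [Finset.mem_union, Finset.mem_filter, Finset.mem_univ, true_and]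
      by_contra hc
      push_neg at hc
      exact hj (by rw [hzdef]; simp [hc.1, hc.2])
    calc S.card ≤ _ := Finset.card_le_card hsub
      _ ≤ _ := Finset.card_union_le _ _
      _ ≤ 2 * k := by omega
  set m := S.card with hm
  set e : Fin m ≃ {j // j ∈ S} := S.equivFin.symm with hedef
  -- w = z restricted to S is killed by the square Vandermonde system
  have hw : (fun i : Fin m => z (e i)) = 0 := by
    apply Matrix.eq_zero_of_forall_pow_sum_mul_pow_eq_zero
      (f := fun i : Fin m => a (e i))
      (ha_inj.comp (Subtype.val_injective.comp e.injective))
    intro i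
    have hik : (i : ℕ) < 2 * k := lt_of_lt_of_le i.isLt hScard
    have hsum : ∑ j : Fin m, z ((e j : Fin n)) * a ((e j : Fin n)) ^ (i : ℕ)
        = ∑ j ∈ S, z j * a j ^ (i : ℕ) := by
      rw [Equiv.sum_comp e (fun s : {j // j ∈ S} => z (s : Fin n) * a (s : Fin n) ^ (i : ℕ))]
      exact Finset.sum_coe_sort S (fun j => z j * a j ^ (i : ℕ))
    rw [hsum, ← hz ⟨(i : ℕ), hik⟩]
    apply Finset.sum_subset (Finset.subset_univ S)
    intro j _ hj
    simp only [hSdef, Finset.mem_filter, Finset.mem_univ, true_and, not_not] at hj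
    simp [hj]
  -- conclude z = 0
  funext j
  have hzj : z j = 0 := by
    by_contra hzj
    have hjS : j ∈ S := by simp [hSdef, hzj]
    have := congrFun hw (e.symm ⟨j, hjS⟩)
    simp only [Equiv.apply_symm_apply, Pi.zero_apply] at this
    exact hzj this
  exact sub_eq_zero.mp (by simpa [hzdef] using hzj)
end

section
/- Let H = (L, R, E) be a bipartite graph with |L| = m, m ≤ |R| ≤ 2m, such that (a) every vertex of L has degree at least (2/3)·m, and (b) for every A ⊆ L with |A| ≥ m/2 one has Σ_{v∈A} deg(v) ≥ |A|·m − m/4. Then H has an L-perfect matching. -/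
/-- Deterministic core of the random-graph matching lemma: a bipartite graph
`H = (L, R, E)` with `|L| = m ≤ |R| ≤ 2m`, minimum `L`-degree at least
`(2/3)·m`, and degree-sum at least `|A|·m − m/4` over every `A ⊆ L` with
`|A| ≥ m/2`, has an `L`-perfect matching. -/
theorem matching_from_degree_conditions {L R : Type*} [Fintype L] [Fintype R]
    (E : L → R → Prop) [∀ l, DecidablePred (E l)]
    (m : ℕ) (hm : Fintype.card L = m)
    (hLR : m ≤ Fintype.card R) (hRL : Fintype.card R ≤ 2 * m)
    (hdeg : ∀ l : L,
      (2 : ℝ) / 3 * m ≤ ((Finset.univ.filter (E l)).card : ℝ))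
    (hsum : ∀ A : Finset L, (m : ℝ) / 2 ≤ (A.card : ℝ) →
      (A.card : ℝ) * m - m / 4 ≤
        ∑ l ∈ A, ((Finset.univ.filter (E l)).card : ℝ)) :
    ∃ f : L → R, Function.Injective f ∧ ∀ l, E l (f l) := by
  rw [← Fintype.all_card_le_filter_rel_iff_exists_injective]
  intro A
  set N : Finset R := {b | ∃ a ∈ A, E a b} with hN
  rcases A.eq_empty_or_nonempty with rfl | ⟨l0, hl0⟩
  · simp
  have hsub : ∀ l ∈ A, Finset.univ.filter (E l) ⊆ N := by
    intro l hl b hb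
    simp only [hN, Finset.mem_filter, Finset.mem_univ, true_and] at hb ⊢
    exact ⟨l, hl, hb⟩
  have hAm : A.card ≤ m := hm ▸ A.card_le_univ.trans_eq (by simp)
  by_cases hA : (A.card : ℝ) ≤ 2 / 3 * m
  · -- small case: use min degree of one vertex
    have h1 : (2 : ℝ) / 3 * m ≤ (N.card : ℝ) := by
      refine (hdeg l0).trans ?_
      exact_mod_cast Finset.card_le_card (hsub l0 hl0)
    exact_mod_cast hA.trans h1
  · push_neg at hA
    have hm2 : (m : ℝ) / 2 ≤ A.card := by
      refine le_trans ?_ hA.le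
      have : (0:ℝ) ≤ m := Nat.cast_nonneg m
      linarith
    have hApos : (0 : ℝ) < A.card := by
      exact_mod_cast Finset.card_pos.mpr ⟨l0, hl0⟩
    have hmpos : (0 : ℝ) < m := by
      exact_mod_cast (Finset.card_pos.mpr ⟨l0, hl0⟩).trans_le hAm
    have hsumle : ∑ l ∈ A, ((Finset.univ.filter (E l)).card : ℝ)
        ≤ (A.card : ℝ) * N.card := by
      calc ∑ l ∈ A, ((Finset.univ.filter (E l)).card : ℝ)
          ≤ ∑ _l ∈ A, (N.card : ℝ) := by
            refine Finset.sum_le_sum fun l hl => ?_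
            exact_mod_cast Finset.card_le_card (hsub l hl)
        _ = (A.card : ℝ) * N.card := by rw [Finset.sum_const, nsmul_eq_mul]
    have key : (A.card : ℝ) * m - m / 4 ≤ (A.card : ℝ) * N.card :=
      (hsum A hm2).trans hsumle
    -- hence N.card ≥ m - m/(4 A.card) ≥ m - 3/8 > m - 1, so N.card ≥ m ≥ A.card
    have hNm : (m : ℝ) - 1 < (N.card : ℝ) := by
      nlinarith [key, hA, hmpos, hApos, Nat.cast_nonneg (α := ℝ) N.card]
    have hNm' : m ≤ N.card := by
      by_contra h
      push_neg at h
      have h1 : N.card + 1 ≤ m := h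
      have : (N.card : ℝ) + 1 ≤ m := by exact_mod_cast h1
      linarith
    exact hAm.trans hNm'
end

section
/- Let G be a graph on vertex set U ∪ V where U = {u_1,...,u_n}, V = {v_1,...,v_n}, constructed from a bit string x indexed by pairs 1 ≤ i < j ≤ n as follows: if x_{i,j} = 0 add edges {u_i,u_j} and {v_i,v_j}; if x_{i,j} = 1 add edges {u_i,v_j} and {v_i,u_j}. Then G is (n−1)-regular; moreover if x is the all-zeros string then G is the disjoint union of two n-cliques and hence not (n−1)-colorable, while if x has exactly one coordinate equal to 1 then G is connected, is neither a clique nor an odd cycle (for n ≥ 4), and is (n−1)-colorable. -/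
/-- The adjacency relation of the query-lower-bound gadget graph on
`U ∪ V = Fin n ⊕ Fin n`: for `i ≠ j`, if `x i j = false` the internal edges
`{u_i,u_j}` and `{v_i,v_j}` are present; if `x i j = true` the crossing edges
`{u_i,v_j}` and `{v_i,u_j}` are present. -/
def gadgetAdj (n : ℕ) (x : Fin n → Fin n → Bool) :
    Fin n ⊕ Fin n → Fin n ⊕ Fin n → Prop
  | Sum.inl i, Sum.inl j => i ≠ j ∧ x i j = false
  | Sum.inr i, Sum.inr j => i ≠ j ∧ x i j = false
  | Sum.inl i, Sum.inr j => i ≠ j ∧ x i j = true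
  | Sum.inr i, Sum.inl j => i ≠ j ∧ x i j = true

/-- The gadget graph built from a symmetric bit string `x`. -/
def gadget (n : ℕ) (x : Fin n → Fin n → Bool) (hx : ∀ i j, x i j = x j i) :
    SimpleGraph (Fin n ⊕ Fin n) where
  Adj := gadgetAdj n x
  symm := by
    constructor
    rintro (i | i) (j | j) ⟨h1, h2⟩ <;> exact ⟨h1.symm, (hx j i).trans h2⟩
  loopless := by
    constructor
    rintro (i | i) ⟨h1, _⟩ <;> exact h1 rfl

lemma card_ne (n : ℕ) (i : Fin n) : Nat.card {j : Fin n // j ≠ i} = n - 1 := by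
  rw [Nat.card_eq_fintype_card]
  have h1 : Fintype.card {j : Fin n // j = i} = 1 := Fintype.card_subtype_eq i
  have h := Fintype.card_subtype_compl (fun j : Fin n => j = i)
  simp only [h1, Fintype.card_fin] at h
  exact h

lemma gadget_deg (n : ℕ) (x : Fin n → Fin n → Bool) (hx : ∀ i j, x i j = x j i)
    (w : Fin n ⊕ Fin n) : ((gadget n x hx).neighborSet w).ncard = n - 1 := by
  obtain (i | i) := w
  · rw [Set.ncard, ← card_ne n i]
    apply Nat.card_congr
    refine Equiv.ofBijective (fun w => ⟨Sum.elim id id w.1, ?_⟩) ⟨?_, ?_⟩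
    · obtain ⟨(j|j), hj⟩ := w <;> exact hj.1.symm
    · rintro ⟨(a|a), ha⟩ ⟨(b|b), hb⟩ h <;>
        simp only [Subtype.mk.injEq, Sum.elim_inl, Sum.elim_inr, id] at h ⊢ <;>
        subst h
      · rfl
      · exact absurd hb.2 (by simp [ha.2])
      · exact absurd hb.2 (by simp [ha.2])
      · rfl
    · rintro ⟨j, hj⟩
      cases h : x i j with
      | false => exact ⟨⟨Sum.inl j, hj.symm, h⟩, rfl⟩
      | true => exact ⟨⟨Sum.inr j, hj.symm, h⟩, rfl⟩
  · rw [Set.ncard, ← card_ne n i]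
    apply Nat.card_congr
    refine Equiv.ofBijective (fun w => ⟨Sum.elim id id w.1, ?_⟩) ⟨?_, ?_⟩
    · obtain ⟨(j|j), hj⟩ := w <;> exact hj.1.symm
    · rintro ⟨(a|a), ha⟩ ⟨(b|b), hb⟩ h <;>
        simp only [Subtype.mk.injEq, Sum.elim_inl, Sum.elim_inr, id] at h ⊢ <;>
        subst h
      · rfl
      · exact absurd hb.2 (by simp [ha.2])
      · exact absurd hb.2 (by simp [ha.2])
      · rfl
    · rintro ⟨j, hj⟩
      cases h : x i j with
      | true => exact ⟨⟨Sum.inl j, hj.symm, h⟩, rfl⟩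
      | false => exact ⟨⟨Sum.inr j, hj.symm, h⟩, rfl⟩

/-- The gadget graph is `(n−1)`-regular. Moreover, if `x` is all-zeros then
it is not `(n−1)`-colorable (it is two disjoint `n`-cliques), while if `x`
has exactly one coordinate equal to `1` then it is connected, neither a
clique nor an odd cycle, and `(n−1)`-colorable. -/
theorem gadget_properties (n : ℕ) (hn : 4 ≤ n)
    (x : Fin n → Fin n → Bool) (hx : ∀ i j, x i j = x j i) :
    (∀ w : Fin n ⊕ Fin n, ((gadget n x hx).neighborSet w).ncard = n - 1)
    ∧ ((∀ i j, x i j = false) → ¬(gadget n x hx).Colorable (n - 1))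
    ∧ (∀ i j : Fin n, i ≠ j → x i j = true →
        (∀ a b, x a b = true → (a = i ∧ b = j) ∨ (a = j ∧ b = i)) →
        (gadget n x hx).Connected
        ∧ gadget n x hx ≠ ⊤
        ∧ ¬((gadget n x hx).Connected
            ∧ (∀ w, ((gadget n x hx).neighborSet w).ncard = 2)
            ∧ Odd (Fintype.card (Fin n ⊕ Fin n)))
        ∧ (gadget n x hx).Colorable (n - 1)) := by
  refine ⟨gadget_deg n x hx, ?_, ?_⟩
  · -- all zeros: not colorable
    intro h0 hc
    obtain ⟨C⟩ := hc
    have hinj : Function.Injective (fun a : Fin n => C (Sum.inl a)) := by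
      intro a b hab
      by_contra hne
      exact C.valid (show (gadget n x hx).Adj (Sum.inl a) (Sum.inl b) from ⟨hne, h0 a b⟩) hab
    have := Fintype.card_le_of_injective _ hinj
    simp only [Fintype.card_fin] at this
    omega
  · intro i j hij hxij hone
    have hfalse : ∀ a b : Fin n, a ≠ b → ¬(a = i ∧ b = j) → ¬(a = j ∧ b = i) →
        x a b = false := by
      intro a b hab h1 h2
      cases h : x a b with
      | false => rfl
      | true => rcases hone a b h with h' | h' <;> tauto
    obtain ⟨k, hki, hkj⟩ : ∃ k : Fin n, k ≠ i ∧ k ≠ j := by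
      by_contra h
      push_neg at h
      have hsub : (Finset.univ : Finset (Fin n)) ⊆ {i, j} := by
        intro a _
        simp only [Finset.mem_insert, Finset.mem_singleton]
        by_cases ha : a = i
        · exact Or.inl ha
        · exact Or.inr (h a ha)
      have hle := Finset.card_le_card hsub
      have h2 : ({i, j} : Finset (Fin n)).card ≤ 2 :=
        (Finset.card_insert_le _ _).trans (by simp)
      simp only [Finset.card_univ, Fintype.card_fin] at hle
      omega
    have hxji : x j i = true := (hx j i).trans hxij
    have hconn : (gadget n x hx).Connected := by
      have hLk : ∀ a : Fin n, (gadget n x hx).Reachable (Sum.inl a) (Sum.inl k) := by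
        intro a
        by_cases hak : a = k
        · exact hak ▸ SimpleGraph.Reachable.refl _
        · exact SimpleGraph.Adj.reachable
            ⟨hak, hfalse a k hak (fun h => hkj h.2) (fun h => hki h.2)⟩
      have hRk : ∀ a : Fin n, (gadget n x hx).Reachable (Sum.inr a) (Sum.inr k) := by
        intro a
        by_cases hak : a = k
        · exact hak ▸ SimpleGraph.Reachable.refl _
        · exact SimpleGraph.Adj.reachable
            ⟨hak, hfalse a k hak (fun h => hkj h.2) (fun h => hki h.2)⟩
      have hkjadj : (gadget n x hx).Adj (Sum.inr k) (Sum.inr j) :=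
        ⟨hkj, hfalse k j hkj (fun h => hki h.1) (fun h => hkj h.1)⟩
      have hcross : (gadget n x hx).Adj (Sum.inr j) (Sum.inl i) :=
        ⟨fun h => hij h.symm, hxji⟩
      have hreach : ∀ w, (gadget n x hx).Reachable w (Sum.inl k) := by
        rintro (a | a)
        · exact hLk a
        · exact (((hRk a).trans hkjadj.reachable).trans hcross.reachable).trans (hLk i)
      have : Nonempty (Fin n ⊕ Fin n) := ⟨Sum.inl k⟩
      exact SimpleGraph.Connected.mk (fun u v => (hreach u).trans (hreach v).symm)
    refine ⟨hconn, ?_, ?_, ?_⟩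
    · intro h
      have hadj : (gadget n x hx).Adj (Sum.inl i) (Sum.inl j) := by
        rw [h]
        simp [hij]
      exact absurd hadj.2 (by simp [hxij])
    · rintro ⟨-, hdeg, -⟩
      have h1 := gadget_deg n x hx (Sum.inl i)
      have h2 := hdeg (Sum.inl i)
      omega
    · rw [SimpleGraph.colorable_iff_exists_bdd_nat_coloring]
      set m := n - 1 with hm
      have hm3 : 3 ≤ m := by omega
      set c : Fin n → ℕ := fun a =>
        if (if a = j then i else a).val < j.val then (if a = j then i else a).val
        else (if a = j then i else a).val - 1 with hc
      have hvne : ∀ a b : Fin n, a ≠ b → (a : ℕ) ≠ (b : ℕ) :=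
        fun a b h h' => h (Fin.ext h')
      have hclt : ∀ a, c a < m := by
        intro a
        simp only [hc]
        by_cases haj : a = j <;> simp only [haj, ite_true, ite_false]
        · have := hvne i j hij
          have := i.isLt; have := j.isLt
          split_ifs <;> omega
        · have := hvne a j haj
          have := a.isLt; have := j.isLt
          split_ifs <;> omega
      have hcinj : ∀ a b : Fin n, c a = c b → a ≠ b →
          (a = i ∧ b = j) ∨ (a = j ∧ b = i) := by
        intro a b hab hne
        simp only [hc] at hab
        by_cases haj : a = j <;> by_cases hbj : b = j <;>
          simp only [haj, hbj, ite_true, ite_false] at hab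
        · exact absurd (haj.trans hbj.symm) hne
        · right
          refine ⟨haj, ?_⟩
          have := hvne i j hij
          have := hvne b j hbj
          have : (i : ℕ) = (b : ℕ) := by split_ifs at hab <;> omega
          exact (Fin.ext this).symm
        · left
          refine ⟨?_, hbj⟩
          have := hvne i j hij
          have := hvne a j haj
          have : (a : ℕ) = (i : ℕ) := by split_ifs at hab <;> omega
          exact Fin.ext this
        · exfalso
          have := hvne a j haj
          have := hvne b j hbj
          have : (a : ℕ) = (b : ℕ) := by split_ifs at hab <;> omega
          exact hne (Fin.ext this)
      have hcij : c i = c j := by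
        simp only [hc]
        rw [if_neg hij]
        simp
      have hmne : ∀ t, t < m → t ≠ (t + 1) % m := by
        intro t ht h
        by_cases h1 : t + 1 = m
        · rw [h1, Nat.mod_self] at h; omega
        · rw [Nat.mod_eq_of_lt (by omega)] at h; omega
      have hmodinj : ∀ s t, s < m → t < m → (s + 1) % m = (t + 1) % m → s = t := by
        intro s t hs ht h
        by_cases h1 : s + 1 = m <;> by_cases h2 : t + 1 = m
        · omega
        · rw [h1, Nat.mod_self, Nat.mod_eq_of_lt (by omega)] at h; omega
        · rw [h2, Nat.mod_self, Nat.mod_eq_of_lt (by omega)] at h; omega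
        · rw [Nat.mod_eq_of_lt (by omega), Nat.mod_eq_of_lt (by omega)] at h; omega
      refine ⟨SimpleGraph.Coloring.mk
        (Sum.elim (fun a => c a) (fun a => (c a + 1) % m)) ?_, ?_⟩
      · rintro (a|a) (b|b) ⟨hab, hxab⟩ hC <;>
          simp only [Sum.elim_inl, Sum.elim_inr] at hC
        · rcases hcinj a b hC hab with ⟨ha, hb⟩ | ⟨ha, hb⟩ <;> subst ha <;> subst hb
          · simp [hxij] at hxab
          · simp [hxji] at hxab
        · have hcc : c a = c b := by
            rcases hone a b hxab with ⟨ha, hb⟩ | ⟨ha, hb⟩ <;> subst ha <;> subst hb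
            · exact hcij
            · exact hcij.symm
          rw [hcc] at hC
          exact hmne (c b) (hclt b) hC
        · have hcc : c a = c b := by
            rcases hone a b hxab with ⟨ha, hb⟩ | ⟨ha, hb⟩ <;> subst ha <;> subst hb
            · exact hcij
            · exact hcij.symm
          rw [hcc] at hC
          exact hmne (c b) (hclt b) hC.symm
        · have hcc := hmodinj _ _ (hclt a) (hclt b) hC
          rcases hcinj a b hcc hab with ⟨ha, hb⟩ | ⟨ha, hb⟩ <;> subst ha <;> subst hb
          · simp [hxij] at hxab
          · simp [hxji] at hxab
      · rintro (a|a)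
        · exact hclt a
        · exact Nat.mod_lt _ (by omega)
end
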